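/- Let g, h, k > 0 and ω, c be real numbers satisfying the dispersion relation k·coth(kh)·(c + hω)² − ω·(c + hω) = g (the case s = 0 of the dispersion relation, corresponding to Stokes' condition at the bottom). Then c ≠ −hω; and if moreover c·ω > 0 (the speed and the vorticity have the same sign), then |c| < √(gh). -/

import Mathlib

lemma sinh_lt_mul_cosh {x : ℝ} (hx : 0 < x) : Real.sinh x < x * Real.cosh x := by
  have hmono : StrictMonoOn (fun y : ℝ => y * Real.cosh y - Real.sinh y) (Set.Ici 0) := by
    apply strictMonoOn_of_deriv_pos (convex_Ici 0)
    · fun_prop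
    · intro y hy
      rw [interior_Ici] at hy
      have hd : HasDerivAt (fun y : ℝ => y * Real.cosh y - Real.sinh y)
          (y * Real.sinh y) y := by
        have := ((hasDerivAt_id y).mul (Real.hasDerivAt_cosh y)).sub (Real.hasDerivAt_sinh y)
        exact (by simpa using this : HasDerivAt (id * Real.cosh - Real.sinh) (y * Real.sinh y) y)
      rw [hd.deriv]
      exact mul_pos hy (Real.sinh_pos_iff.2 hy)
  have := hmono (Set.self_mem_Ici) (Set.mem_Ici.2 hx.le) hx
  simpa using this

/-- If `g, h, k > 0` and `k·coth(kh)·(c + hω)² − ω·(c + hω) = g`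
(the dispersion relation with Stokes' condition `s = 0`), then `c ≠ −hω`, and if
moreover `c·ω > 0` then `|c| < √(gh)`. -/
theorem wave_speed_bound (g h k ω c : ℝ) (hg : 0 < g) (hh : 0 < h) (hk : 0 < k)
    (hdisp : k * (Real.cosh (k * h) / Real.sinh (k * h)) * (c + h * ω) ^ 2
      - ω * (c + h * ω) = g) :
    c ≠ -(h * ω) ∧ (c * ω > 0 → |c| < Real.sqrt (g * h)) := by
  have hkh : 0 < k * h := mul_pos hk hh
  have hs : 0 < Real.sinh (k * h) := Real.sinh_pos_iff.2 hkh
  have hA : c + h * ω ≠ 0 := by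
    intro hA0
    rw [hA0] at hdisp
    simp at hdisp
    linarith
  constructor
  · intro hc; apply hA; rw [hc]; ring
  · intro hcω
    -- coth(kh) > 1/(kh), so k * coth(kh) > 1/h
    have hcoth : 1 / h < k * (Real.cosh (k * h) / Real.sinh (k * h)) := by
      rw [div_lt_iff₀ hh, show k * (Real.cosh (k * h) / Real.sinh (k * h)) * h
          = (k * h * Real.cosh (k * h)) / Real.sinh (k * h) by ring,
        lt_div_iff₀ hs]
      nlinarith [sinh_lt_mul_cosh hkh]
    have hA2 : 0 < (c + h * ω) ^ 2 := by positivity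
    -- g * h > (c+hω)² - hω(c+hω) = c² + c h ω > c²
    have key : c ^ 2 < g * h := by
      have h1 : (1 / h) * (c + h * ω) ^ 2 < k * (Real.cosh (k * h) / Real.sinh (k * h)) * (c + h * ω) ^ 2 :=
        mul_lt_mul_of_pos_right hcoth hA2
      have h2 : (1 / h) * (c + h * ω) ^ 2 = (c + h * ω) ^ 2 / h := by ring
      have h3 : c * (h * ω) > 0 := by
        rcases lt_or_gt_of_ne (fun h0 : c = 0 => by simp [h0] at hcω) with hc | hc
        · have hω : ω < 0 := by nlinarith
          have : c * ω > 0 := hcω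
          nlinarith
        · nlinarith
      have h4 : (c + h * ω) ^ 2 < h * (k * (Real.cosh (k * h) / Real.sinh (k * h)) * (c + h * ω) ^ 2) := by
        have h5 := mul_lt_mul_of_pos_left h1 hh
        calc (c + h * ω) ^ 2 = h * (1 / h * (c + h * ω) ^ 2) := by field_simp
          _ < _ := h5
      nlinarith [h4, h3, hdisp, mul_pos hh hg]
    have : |c| < Real.sqrt (g * h) := by
      rw [← Real.sqrt_sq_eq_abs]
      exact Real.sqrt_lt_sqrt (by positivity) key
    exact this
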